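/- Let A ⊆ ℝ be an open invex set with respect to η and a, b ∈ A with η(b,a) ≠ 0 and a < a + η(b,a). If f : A → ℝ is differentiable, f′ integrable on [a, a+η(b,a)], and |f′| is preinvex on A, then |(f(a)+f(a+η(b,a)))/2 − (1/η(b,a)) ∫_a^{a+η(b,a)} f(x) dx| ≤ (|η(b,a)|/8)(|f′(a)| + |f′(b)|). -/

import Mathlib

open MeasureTheory intervalIntegral

/-- Riemann-Liouville left fractional integral `J_{a+}^α f(x)`. -/
noncomputable def JL (α a x : ℝ) (f : ℝ → ℝ) : ℝ :=
  (1 / Real.Gamma α) * ∫ t in a..x, (x - t) ^ (α - 1) * f t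

/-- Riemann-Liouville right fractional integral `J_{b-}^α f(x)`. -/
noncomputable def JR (α x b : ℝ) (f : ℝ → ℝ) : ℝ :=
  (1 / Real.Gamma α) * ∫ t in x..b, (t - x) ^ (α - 1) * f t

/-- `A` is invex with respect to `η`. -/
def InvexSet (A : Set ℝ) (η : ℝ → ℝ → ℝ) : Prop :=
  ∀ x ∈ A, ∀ y ∈ A, ∀ t ∈ Set.Icc (0:ℝ) 1, x + t * η y x ∈ A

/-- `f` is preinvex with respect to `η` on `A`. -/
def PreinvexOn (A : Set ℝ) (η : ℝ → ℝ → ℝ) (f : ℝ → ℝ) : Prop :=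
  ∀ x ∈ A, ∀ y ∈ A, ∀ t ∈ Set.Icc (0:ℝ) 1,
    f (x + t * η y x) ≤ (1 - t) * f x + t * f y

/-- Condition C of Mohan and Neogy. -/
def CondC (A : Set ℝ) (η : ℝ → ℝ → ℝ) : Prop :=
  ∀ x ∈ A, ∀ y ∈ A, ∀ t ∈ Set.Icc (0:ℝ) 1,
    η y (y + t * η x y) = -t * η x y ∧ η x (y + t * η x y) = (1 - t) * η x y


lemma poly_int (c0 c1 c2 p q : ℝ) :
    ∫ t in p..q, (c0 + c1*t + c2*t^2) =
      (c0*q + c1*q^2/2 + c2*q^3/3) - (c0*p + c1*p^2/2 + c2*p^3/3) := by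
  apply intervalIntegral.integral_eq_sub_of_hasDerivAt
  · intro t ht
    have h1 : HasDerivAt (fun t : ℝ => c0*t + c1*t^2/2 + c2*t^3/3)
        (c0 + c1*t + c2*t^2) t := by
      have := (((hasDerivAt_id t).const_mul c0).add
        (((hasDerivAt_pow 2 t).const_mul c1).div_const 2)).add
        (((hasDerivAt_pow 3 t).const_mul c2).div_const 3)
      refine this.congr_deriv ?_
      ring
    exact h1
  · apply Continuous.intervalIntegrable
    fun_prop

lemma core_int (P Q : ℝ) :
    ∫ t in (0:ℝ)..1, |t - 1/2| * ((1-t)*P + t*Q) = (P+Q)/8 := by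
  have hc : Continuous fun t : ℝ => |t - 1/2| * ((1-t)*P + t*Q) :=
    ((continuous_id.sub continuous_const).abs).mul (by fun_prop)
  have hi1 : ∫ t in (0:ℝ)..(1/2), |t - 1/2| * ((1-t)*P + t*Q)
      = ∫ t in (0:ℝ)..(1/2), ((1/2)*P + (-(3/2)*P + (1/2)*Q)*t + (P - Q)*t^2) := by
    apply intervalIntegral.integral_congr
    intro t ht
    rw [Set.uIcc_of_le (by norm_num)] at ht
    have h : |t - 1/2| = 1/2 - t := by
      rw [abs_of_nonpos (by linarith [ht.2])]; ring
    simp only [h]; ring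
  have hi2 : ∫ t in (1/2 : ℝ)..1, |t - 1/2| * ((1-t)*P + t*Q)
      = ∫ t in (1/2 : ℝ)..1, (-(1/2)*P + ((3/2)*P - (1/2)*Q)*t + (Q - P)*t^2) := by
    apply intervalIntegral.integral_congr
    intro t ht
    rw [Set.uIcc_of_le (by norm_num)] at ht
    have h : |t - 1/2| = t - 1/2 := abs_of_nonneg (by linarith [ht.1])
    simp only [h]; ring
  have hsplit : (∫ t in (0:ℝ)..(1/2), |t - 1/2| * ((1-t)*P + t*Q)) +
      ∫ t in (1/2:ℝ)..1, |t - 1/2| * ((1-t)*P + t*Q)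
      = ∫ t in (0:ℝ)..1, |t - 1/2| * ((1-t)*P + t*Q) :=
    intervalIntegral.integral_add_adjacent_intervals
      (hc.intervalIntegrable _ _) (hc.intervalIntegrable _ _)
  rw [← hsplit, hi1, hi2, poly_int, poly_int]
  ring

lemma main_aux (a h : ℝ) (f : ℝ → ℝ) (Fa Fb : ℝ) (hh : 0 < h)
    (hderiv : ∀ x ∈ Set.Icc a (a+h), HasDerivAt f (deriv f x) x)
    (hint : IntervalIntegrable (deriv f) volume a (a+h))
    (hbound : ∀ t ∈ Set.Icc (0:ℝ) 1, |deriv f (a + t*h)| ≤ (1-t)*Fa + t*Fb) :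
    |(f a + f (a+h))/2 - (1/h) * ∫ x in a..(a+h), f x| ≤ h/8 * (Fa + Fb) := by
  have hle : a ≤ a + h := by linarith
  have hIcc : Set.uIcc a (a+h) = Set.Icc a (a+h) := Set.uIcc_of_le hle
  have hderiv' : ∀ x ∈ Set.uIcc a (a+h), HasDerivAt f (deriv f x) x := by
    rw [hIcc]; exact hderiv
  have hu : ∀ x ∈ Set.uIcc a (a+h), HasDerivAt (fun x : ℝ => x - (a + h/2)) 1 x :=
    fun x _ => (hasDerivAt_id x).sub_const _
  have key := intervalIntegral.integral_mul_deriv_eq_deriv_mul hu hderiv'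
    (intervalIntegrable_const) hint
  simp only [one_mul] at key
  have hid : (f a + f (a+h))/2 - (1/h) * ∫ x in a..(a+h), f x
      = (1/h) * ∫ x in a..(a+h), (x - (a + h/2)) * deriv f x := by
    rw [key]; field_simp; ring
  set G : ℝ → ℝ := fun x => |x - (a + h/2)| * ((1-(x-a)/h)*Fa + ((x-a)/h)*Fb) with hG_def
  have hGcont : Continuous G := by
    apply Continuous.mul
    · exact (continuous_id.sub continuous_const).abs
    · fun_prop
  have hxint : IntervalIntegrable (fun x => (x-(a+h/2)) * deriv f x) volume a (a+h) :=
    hint.continuousOn_mul (by fun_prop)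
  have step1 : |∫ x in a..(a+h), (x-(a+h/2)) * deriv f x|
      ≤ ∫ x in a..(a+h), |(x-(a+h/2)) * deriv f x| :=
    intervalIntegral.abs_integral_le_integral_abs hle
  have step2 : (∫ x in a..(a+h), |(x-(a+h/2)) * deriv f x|) ≤ ∫ x in a..(a+h), G x := by
    apply intervalIntegral.integral_mono_on hle hxint.abs (hGcont.intervalIntegrable _ _)
    intro x hx
    have ht0 : (0:ℝ) ≤ (x-a)/h := div_nonneg (by linarith [hx.1]) hh.le
    have ht1 : (x-a)/h ≤ 1 := by rw [div_le_one hh]; linarith [hx.2]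
    have hxx : a + (x-a)/h * h = x := by field_simp; ring
    have hb := hbound ((x-a)/h) ⟨ht0, ht1⟩
    rw [hxx] at hb
    rw [abs_mul]
    exact mul_le_mul_of_nonneg_left hb (abs_nonneg _)
  have hGcomp : ∀ t : ℝ, G (h*t + a) = h * (|t - 1/2| * ((1-t)*Fa + t*Fb)) := by
    intro t
    have e1 : |h*t + a - (a + h/2)| = h * |t - 1/2| := by
      rw [show h*t + a - (a + h/2) = h * (t - 1/2) by ring, abs_mul, abs_of_pos hh]
    have e2 : (h*t + a - a)/h = t := by field_simp; ring
    rw [hG_def]; simp only [e1, e2]; ring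
  have step3 : (∫ x in a..(a+h), G x) = h^2 * ((Fa + Fb)/8) := by
    have hcomp := intervalIntegral.integral_comp_mul_add (a := 0) (b := 1) G (ne_of_gt hh) a
    simp only [mul_zero, zero_add, mul_one, smul_eq_mul] at hcomp
    have hl : ∫ t in (0:ℝ)..1, G (h*t + a) = h * ((Fa + Fb)/8) := by
      calc ∫ t in (0:ℝ)..1, G (h*t + a)
          = ∫ t in (0:ℝ)..1, h * (|t - 1/2| * ((1-t)*Fa + t*Fb)) := by
            apply intervalIntegral.integral_congr; intro t _; exact hGcomp t
        _ = h * ∫ t in (0:ℝ)..1, |t - 1/2| * ((1-t)*Fa + t*Fb) :=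
            intervalIntegral.integral_const_mul _ _
        _ = h * ((Fa + Fb)/8) := by rw [core_int]
    rw [hl, add_comm h a] at hcomp
    have he : (∫ x in a..(a+h), G x) = h * (h * ((Fa+Fb)/8)) := by
      rw [hcomp, ← mul_assoc, mul_inv_cancel₀ (ne_of_gt hh), one_mul]
    rw [he]; ring
  rw [hid, abs_mul, abs_of_nonneg (by positivity : (0:ℝ) ≤ 1/h)]
  calc 1/h * |∫ x in a..(a+h), (x - (a + h/2)) * deriv f x|
      ≤ 1/h * ∫ x in a..(a+h), G x := by
        apply mul_le_mul_of_nonneg_left (le_trans step1 step2) (by positivity)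
    _ = h/8 * (Fa + Fb) := by rw [step3]; field_simp

theorem preinvex_classical_estimate
    (A : Set ℝ) (η : ℝ → ℝ → ℝ) (a b : ℝ) (f : ℝ → ℝ)
    (hA : IsOpen A) (hinv : InvexSet A η) (ha : a ∈ A) (hb : b ∈ A)
    (hη : η b a ≠ 0) (hab : a < a + η b a)
    (hdiff : ∀ x ∈ A, DifferentiableAt ℝ f x)
    (hint : IntervalIntegrable (deriv f) volume a (a + η b a))
    (hpre : PreinvexOn A η (fun x => |deriv f x|)) :
    |(f a + f (a + η b a)) / 2 -
        (1 / η b a) * ∫ x in a..(a + η b a), f x| ≤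
      |η b a| / 8 * (|deriv f a| + |deriv f b|) := by
  have hh : 0 < η b a := by linarith
  have hbound : ∀ t ∈ Set.Icc (0:ℝ) 1,
      |deriv f (a + t * η b a)| ≤ (1-t) * |deriv f a| + t * |deriv f b| := by
    intro t ht
    exact hpre a ha b hb t ht
  have hmem : ∀ x ∈ Set.Icc a (a + η b a), x ∈ A := by
    intro x hx
    have ht0 : (0:ℝ) ≤ (x-a)/(η b a) := div_nonneg (by linarith [hx.1]) hh.le
    have ht1 : (x-a)/(η b a) ≤ 1 := by rw [div_le_one hh]; linarith [hx.2]
    have := hinv a ha b hb ((x-a)/(η b a)) ⟨ht0, ht1⟩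
    have hxx : a + (x-a)/(η b a) * η b a = x := by field_simp; ring
    rwa [hxx] at this
  have hderiv : ∀ x ∈ Set.Icc a (a + η b a), HasDerivAt f (deriv f x) x :=
    fun x hx => (hdiff x (hmem x hx)).hasDerivAt
  have := main_aux a (η b a) f (|deriv f a|) (|deriv f b|) hh hderiv hint hbound
  rwa [abs_of_pos hh]
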